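/- Let X be a real Hilbert space and let V be a bounded convex body in X of class C¹ with 0 ∈ int V, boundary S = ∂V and outer unit normal map N_S : S → S_X, and let μ_V denote the Minkowski functional (gauge) of V. Then N_S is Lipschitz on S if and only if for every α > 0 the gauge μ_V is Fréchet differentiable with Lipschitz gradient on the set {x ∈ X : μ_V(x) ≥ α}. -/

import Mathlib

open scoped RealInnerProductSpace
open Metric Set Filter Asymptotics

variable {X : Type*} [NormedAddCommGroup X] [InnerProductSpace ℝ X]

/-- A convex body: a closed convex set with nonempty interior. -/
def IsConvexBody (V : Set X) : Prop :=
  IsClosed V ∧ Convex ℝ V ∧ (interior V).Nonempty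

/-- `u` is an outward unit normal to `∂V` at `x`. -/
def IsOutwardNormal (V : Set X) (x u : X) : Prop :=
  ‖u‖ = 1 ∧ ∀ y ∈ V, ⟪u, y - x⟫ ≤ 0

/-- Quadratic error bound implies gradient. -/
lemma hasGradientAt_of_quadratic [CompleteSpace X] (f : X → ℝ) (g x : X) (C : ℝ)
    (h : ∀ᶠ y in nhds x, |f y - f x - ⟪g, y - x⟫| ≤ C * ‖y - x‖ ^ 2) :
    HasGradientAt f g x := by
  rw [hasGradientAt_iff_isLittleO]
  rw [Asymptotics.isLittleO_iff]
  intro c hc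
  have hball : Metric.ball x (c / (|C| + 1)) ∈ nhds x :=
    Metric.ball_mem_nhds x (by positivity)
  filter_upwards [h, hball] with y hy hyb
  rw [Real.norm_eq_abs]
  have hd : ‖y - x‖ < c / (|C| + 1) := by
    rw [Metric.mem_ball, dist_eq_norm] at hyb; exact hyb
  calc |f y - f x - ⟪g, y - x⟫| ≤ C * ‖y - x‖ ^ 2 := hy
    _ ≤ |C| * ‖y - x‖ * ‖y - x‖ := by
        rw [sq]
        have : C * (‖y - x‖ * ‖y - x‖) ≤ |C| * (‖y - x‖ * ‖y - x‖) :=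
          mul_le_mul_of_nonneg_right (le_abs_self C) (by positivity)
        nlinarith [this]
    _ ≤ |C| * (c / (|C| + 1)) * ‖y - x‖ := by
        have := mul_le_mul_of_nonneg_left hd.le (abs_nonneg C)
        nlinarith [norm_nonneg (y - x), this]
    _ ≤ c * ‖y - x‖ := by
        have h1 : |C| * (c / (|C| + 1)) ≤ c := by
          rw [mul_div_assoc']
          rw [div_le_iff₀ (by positivity)]
          nlinarith [abs_nonneg C, hc.le]
        exact mul_le_mul_of_nonneg_right h1 (norm_nonneg _)

/-- Subgradient inequality for the gauge from a gradient. -/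
lemma gauge_subgradient [CompleteSpace X] {V : Set X} (hcv : Convex ℝ V) (hnh : V ∈ nhds (0:X))
    {x g : X} (hg : HasGradientAt (gauge V) g x) (y : X) :
    ⟪g, y - x⟫ ≤ gauge V y - gauge V x := by
  set v := y - x with hv
  have hline : HasDerivAt (fun t : ℝ => x + t • v) v 0 := by
    have h1 : HasDerivAt (fun t : ℝ => t • v) ((1:ℝ) • v) 0 :=
      (hasDerivAt_id (0:ℝ)).smul_const v
    simpa using h1.const_add x
  have hF : HasFDerivAt (gauge V) (InnerProductSpace.toDual ℝ X g) x := hg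
  have hphi : HasDerivAt (fun t : ℝ => gauge V (x + t • v)) ⟪g, v⟫ 0 := by
    have hF' : HasFDerivAt (gauge V) (InnerProductSpace.toDual ℝ X g) ((fun t : ℝ => x + t • v) 0) := by
      simpa using hF
    have := hF'.comp_hasDerivAt (0:ℝ) hline
    simpa [InnerProductSpace.toDual_apply_apply, Function.comp_def] using this
  have habs : Absorbent ℝ V := absorbent_nhds_zero hnh
  have hslope : Tendsto (slope (fun t : ℝ => gauge V (x + t • v)) 0) (nhdsWithin 0 (Ioi 0))
      (nhds ⟪g, v⟫) :=
    (hasDerivAt_iff_tendsto_slope.1 hphi).mono_left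
      (nhdsWithin_mono _ (fun t ht => ne_of_gt ht))
  refine le_of_tendsto hslope ?_
  filter_upwards [Ioo_mem_nhdsGT_of_mem (by constructor <;> norm_num : (0:ℝ) ∈ Ico 0 1)]
    with t ht
  have ht0 : 0 < t := ht.1
  have hcomb : gauge V (x + t • v) ≤ (1 - t) * gauge V x + t * gauge V y := by
    have hxy : x + t • v = (1 - t) • x + t • y := by
      rw [hv]; module
    rw [hxy]
    calc gauge V ((1 - t) • x + t • y) ≤ gauge V ((1 - t) • x) + gauge V (t • y) :=
          gauge_add_le hcv habs _ _
      _ = (1 - t) * gauge V x + t * gauge V y := by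
          rw [gauge_smul_of_nonneg (by linarith [ht.2] : (0:ℝ) ≤ 1 - t),
            gauge_smul_of_nonneg ht0.le]; simp [smul_eq_mul]
  have hft : gauge V (x + t • v) - gauge V x ≤ t * (gauge V y - gauge V x) := by
    ring_nf at hcomb ⊢; linarith
  rw [slope_def_field]
  have h0 : x + (0:ℝ) • v = x := by simp
  rw [h0]
  rw [div_le_iff₀ (by linarith : (0:ℝ) < t - 0)]
  ring_nf at hft ⊢
  linarith

/-- Difference of rescaled vectors. -/
lemma smul_inv_sub_le (u v : X) {s t : ℝ} (hs : 0 < s) (ht : 0 < t) :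
    ‖s⁻¹ • u - t⁻¹ • v‖ ≤ s⁻¹ * ‖u - v‖ + (|s - t| * ‖v‖) / (s * t) := by
  have h1 : s⁻¹ • u - t⁻¹ • v = s⁻¹ • (u - v) + (s⁻¹ - t⁻¹) • v := by
    rw [smul_sub, sub_smul]; abel
  rw [h1]
  refine (norm_add_le _ _).trans ?_
  rw [norm_smul, norm_smul, Real.norm_eq_abs, Real.norm_eq_abs]
  have h2 : |s⁻¹ - t⁻¹| = |s - t| / (s * t) := by
    have h3 : s⁻¹ - t⁻¹ = (t - s) / (s * t) := by field_simp
    rw [h3, abs_div, abs_of_pos (by positivity : (0:ℝ) < s * t), abs_sub_comm]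
  rw [h2, abs_of_pos (inv_pos.2 hs), div_mul_eq_mul_div]

/-- Normalization is Lipschitz away from the origin. -/
lemma normalize_lipschitz (a b : X) {c : ℝ} (hc : 0 < c) (ha : c ≤ ‖a‖) (hb : c ≤ ‖b‖) :
    ‖‖a‖⁻¹ • a - ‖b‖⁻¹ • b‖ ≤ (2 / c) * ‖a - b‖ := by
  have hA : 0 < ‖a‖ := lt_of_lt_of_le hc ha
  have hB : 0 < ‖b‖ := lt_of_lt_of_le hc hb
  refine (smul_inv_sub_le a b hA hB).trans ?_
  have hci : c * c⁻¹ = 1 := mul_inv_cancel₀ hc.ne'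
  have h1 : ‖a‖⁻¹ * ‖a - b‖ ≤ c⁻¹ * ‖a - b‖ :=
    mul_le_mul_of_nonneg_right (by rw [inv_le_inv₀ hA hc]; exact ha) (norm_nonneg _)
  have h2 : (|‖a‖ - ‖b‖| * ‖b‖) / (‖a‖ * ‖b‖) ≤ c⁻¹ * ‖a - b‖ := by
    have habs : |‖a‖ - ‖b‖| ≤ ‖a - b‖ := abs_norm_sub_norm_le a b
    have heq : (|‖a‖ - ‖b‖| * ‖b‖) / (‖a‖ * ‖b‖) = |‖a‖ - ‖b‖| / ‖a‖ := by
      field_simp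
    rw [heq, div_le_iff₀ hA]
    have key : c⁻¹ * ‖a - b‖ * c ≤ c⁻¹ * ‖a - b‖ * ‖a‖ := by
      gcongr
    nlinarith [norm_nonneg (a - b)]
  calc ‖a‖⁻¹ * ‖a - b‖ + |‖a‖ - ‖b‖| * ‖b‖ / (‖a‖ * ‖b‖)
      ≤ c⁻¹ * ‖a - b‖ + c⁻¹ * ‖a - b‖ := add_le_add h1 h2
    _ = (2 / c) * ‖a - b‖ := by ring


theorem gauss_map_lipschitz_iff_gauge_C11 [CompleteSpace X]
    (V : Set X) (hV : IsConvexBody V) (hVb : Bornology.IsBounded V)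
    (h0 : (0:X) ∈ interior V) (NS : X → X)
    (hNS : ∀ x ∈ frontier V, IsOutwardNormal V x (NS x) ∧
      ∀ u, IsOutwardNormal V x u → u = NS x) :
    (∃ K : ℝ, ∀ x ∈ frontier V, ∀ y ∈ frontier V, ‖NS x - NS y‖ ≤ K * ‖x - y‖) ↔
    (∀ α > (0:ℝ), ∃ (g : X → X) (K : ℝ),
      (∀ x : X, α ≤ gauge V x → HasGradientAt (gauge V) (g x) x) ∧
      (∀ x y : X, α ≤ gauge V x → α ≤ gauge V y → ‖g x - g y‖ ≤ K * ‖x - y‖)) := by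
  obtain ⟨hVcl, hVcv, -⟩ := hV
  have hnh : V ∈ nhds (0:X) := mem_interior_iff_mem_nhds.1 h0
  have habs : Absorbent ℝ V := absorbent_nhds_zero hnh
  obtain ⟨r, hr0, hrV⟩ : ∃ r > 0, ball (0:X) r ⊆ V := by
    rcases Metric.mem_nhds_iff.1 hnh with ⟨r, hr0, hrV⟩; exact ⟨r, hr0, hrV⟩
  obtain ⟨R, hR0, hRV⟩ : ∃ R, 0 < R ∧ V ⊆ closedBall (0:X) R := by
    rcases hVb.subset_closedBall_lt 0 0 with ⟨R, hR0, hRV⟩; exact ⟨R, hR0, hRV⟩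
  have hub : ∀ x : X, gauge V x ≤ ‖x‖ / r := fun x => by
    have := gauge_mono (absorbent_ball_zero hr0) hrV x
    rwa [gauge_ball hr0.le] at this
  have hnorm_le : ∀ x : X, ‖x‖ ≤ R * gauge V x := fun x => by
    have := le_gauge_of_subset_closedBall habs hR0.le hRV (x := x)
    rw [div_le_iff₀ hR0] at this; linarith
  have hglip : ∀ x y : X, gauge V x - gauge V y ≤ ‖x - y‖ / r := fun x y => by
    have h1 : gauge V x ≤ gauge V y + gauge V (x - y) := by
      have := gauge_add_le hVcv habs y (x - y); simpa using this
    have := hub (x - y); linarith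
  have hmem : ∀ x : X, gauge V x ≤ 1 → x ∈ V := fun x hx => by
    have := (gauge_le_one_iff_mem_closure hVcv hnh).1 hx
    rwa [hVcl.closure_eq] at this
  have hfront : ∀ x : X, gauge V x = 1 ↔ x ∈ frontier V := fun x =>
    gauge_eq_one_iff_mem_frontier hVcv hnh
  have hVnorm : ∀ x ∈ V, ‖x‖ ≤ R := fun x hx => by
    have := hRV hx; rwa [mem_closedBall, dist_zero_right] at this
  constructor
  · -- forward: NS Lipschitz ⟹ gauge C^{1,1} away from 0
    rintro ⟨K, hK⟩ α hα
    set β := α / 2 with hβdef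
    have hβ0 : 0 < β := by positivity
    have hβα : β ≤ α := by rw [hβdef]; linarith
    set K' := max K 0 with hK'def
    have hK'0 : 0 ≤ K' := le_max_right _ _
    set π : X → X := fun x => (gauge V x)⁻¹ • x with hπdef
    set g : X → X := fun x => (⟪NS (π x), π x⟫)⁻¹ • NS (π x) with hgdef
    -- pointwise facts
    have hgpos : ∀ x : X, β ≤ gauge V x → 0 < gauge V x := fun x hx =>
      lt_of_lt_of_le hβ0 hx
    have hπ1 : ∀ x : X, β ≤ gauge V x → gauge V (π x) = 1 := fun x hx => by
      rw [hπdef]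
      simp only
      rw [gauge_smul_of_nonneg (inv_nonneg.2 (hgpos x hx).le), smul_eq_mul,
        inv_mul_cancel₀ (hgpos x hx).ne']
    have hπf : ∀ x : X, β ≤ gauge V x → π x ∈ frontier V := fun x hx =>
      (hfront _).1 (hπ1 x hx)
    have hπV : ∀ x : X, β ≤ gauge V x → π x ∈ V := fun x hx =>
      hmem _ (le_of_eq (hπ1 x hx))
    have hπR : ∀ x : X, β ≤ gauge V x → ‖π x‖ ≤ R := fun x hx =>
      hVnorm _ (hπV x hx)
    have hu1 : ∀ x : X, β ≤ gauge V x → ‖NS (π x)‖ = 1 := fun x hx =>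
      (hNS _ (hπf x hx)).1.1
    have hu2 : ∀ x : X, β ≤ gauge V x → ∀ y ∈ V, ⟪NS (π x), y - π x⟫ ≤ 0 := fun x hx =>
      (hNS _ (hπf x hx)).1.2
    have hs_lb : ∀ x : X, β ≤ gauge V x → r / 2 ≤ ⟪NS (π x), π x⟫ := by
      intro x hx
      have hmem2 : (r/2) • NS (π x) ∈ V := by
        apply hrV
        rw [mem_ball, dist_zero_right, norm_smul, Real.norm_eq_abs,
          abs_of_pos (by positivity : (0:ℝ) < r/2), hu1 x hx]
        linarith
      have := hu2 x hx _ hmem2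
      rw [inner_sub_right, real_inner_smul_right, real_inner_self_eq_norm_mul_norm,
        hu1 x hx] at this
      linarith
    have hs_pos : ∀ x : X, β ≤ gauge V x → 0 < ⟪NS (π x), π x⟫ := fun x hx =>
      lt_of_lt_of_le (by positivity) (hs_lb x hx)
    have hs_ub : ∀ x : X, β ≤ gauge V x → ⟪NS (π x), π x⟫ ≤ R := fun x hx => by
      have h1 := real_inner_le_norm (NS (π x)) (π x)
      rw [hu1 x hx, one_mul] at h1
      exact h1.trans (hπR x hx)
    -- subgradient property
    have hsub : ∀ x : X, β ≤ gauge V x → ∀ y : X, ⟪g x, y⟫ ≤ gauge V y := by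
      intro x hx y
      set s := ⟪NS (π x), π x⟫ with hsdef
      have hs0 := hs_pos x hx
      have hinner : ⟪g x, y⟫ = s⁻¹ * ⟪NS (π x), y⟫ := by
        rw [hgdef]; simp only; rw [real_inner_smul_left]
      rcases eq_or_lt_of_le (gauge_nonneg y (s := V)) with hy0 | hy0
      · have hy : y = 0 := by
          have := hnorm_le y
          rw [← hy0] at this
          simpa using le_antisymm (by simpa using this) (norm_nonneg y)
        rw [hinner, hy, inner_zero_right, mul_zero, gauge_zero]
      · have hyV : (gauge V y)⁻¹ • y ∈ V := by
          apply hmem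
          rw [gauge_smul_of_nonneg (inv_nonneg.2 hy0.le), smul_eq_mul,
            inv_mul_cancel₀ hy0.ne']
        have h1 := hu2 x hx _ hyV
        rw [inner_sub_right, real_inner_smul_right] at h1
        have h2 : ⟪NS (π x), y⟫ ≤ gauge V y * s := by
          have h1' : (gauge V y)⁻¹ * ⟪NS (π x), y⟫ ≤ s := by linarith
          have h1'' := mul_le_mul_of_nonneg_left h1' hy0.le
          rwa [← mul_assoc, mul_inv_cancel₀ hy0.ne', one_mul] at h1''
        rw [hinner]
        calc s⁻¹ * ⟪NS (π x), y⟫ ≤ s⁻¹ * (gauge V y * s) :=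
              mul_le_mul_of_nonneg_left h2 (inv_nonneg.2 hs0.le)
          _ = gauge V y := by
              rw [mul_comm (gauge V y) s, ← mul_assoc, inv_mul_cancel₀ hs0.ne', one_mul]
    have hgxx : ∀ x : X, β ≤ gauge V x → ⟪g x, x⟫ = gauge V x := by
      intro x hx
      have hgx0 := hgpos x hx
      have hxeq : x = gauge V x • π x := by
        rw [hπdef]; simp only; rw [smul_smul, mul_inv_cancel₀ hgx0.ne', one_smul]
      have hs0 := hs_pos x hx
      have hone : ⟪g x, π x⟫ = 1 := by
        rw [hgdef]
        simp only
        rw [real_inner_smul_left, inv_mul_cancel₀ hs0.ne']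
      have h' : gauge V x * ⟪g x, π x⟫ = ⟪g x, x⟫ := by
        rw [← real_inner_smul_right, ← hxeq]
      rw [← h', hone, mul_one]
    have hsubgrad : ∀ x y : X, β ≤ gauge V x → ⟪g x, y - x⟫ ≤ gauge V y - gauge V x := by
      intro x y hx
      rw [inner_sub_right]
      have := hsub x hx y
      have := hgxx x hx
      linarith
    -- Lipschitz estimates
    set C₁ : ℝ := 1/β + R/(r*β) with hC₁def
    have hC₁0 : 0 < C₁ := by positivity
    have hπlip : ∀ x y : X, β ≤ gauge V x → β ≤ gauge V y →
        ‖π x - π y‖ ≤ C₁ * ‖x - y‖ := by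
      intro x y hx hy
      have hgx := hgpos x hx
      have hgy := hgpos y hy
      have h1 := smul_inv_sub_le x y hgx hgy
      have h2 : (gauge V x)⁻¹ * ‖x - y‖ ≤ (1/β) * ‖x - y‖ := by
        rw [one_div]
        exact mul_le_mul_of_nonneg_right
          (by rw [inv_le_inv₀ hgx hβ0]; exact hx) (norm_nonneg _)
      have h3 : |gauge V x - gauge V y| * ‖y‖ / (gauge V x * gauge V y) ≤
          (R/(r*β)) * ‖x - y‖ := by
        have habs2 : |gauge V x - gauge V y| ≤ ‖x - y‖ / r := by
          rw [abs_sub_le_iff]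
          constructor
          · exact hglip x y
          · have := hglip y x; rwa [norm_sub_rev] at this
        have hynorm : ‖y‖ ≤ R * gauge V y := hnorm_le y
        rw [div_le_iff₀ (by positivity)]
        have key : |gauge V x - gauge V y| * ‖y‖ ≤ (‖x - y‖ / r) * (R * gauge V y) := by
          exact mul_le_mul habs2 hynorm (norm_nonneg _) (by positivity)
        calc |gauge V x - gauge V y| * ‖y‖ ≤ (‖x - y‖ / r) * (R * gauge V y) := key
          _ = (R/(r*β)) * ‖x - y‖ * (β * gauge V y) := by field_simp
          _ ≤ (R/(r*β)) * ‖x - y‖ * (gauge V x * gauge V y) := by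
              gcongr
      calc ‖π x - π y‖ ≤ (gauge V x)⁻¹ * ‖x - y‖ +
            |gauge V x - gauge V y| * ‖y‖ / (gauge V x * gauge V y) := h1
        _ ≤ (1/β) * ‖x - y‖ + (R/(r*β)) * ‖x - y‖ := add_le_add h2 h3
        _ = C₁ * ‖x - y‖ := by rw [hC₁def]; ring
    have hulip : ∀ x y : X, β ≤ gauge V x → β ≤ gauge V y →
        ‖NS (π x) - NS (π y)‖ ≤ K' * C₁ * ‖x - y‖ := by
      intro x y hx hy
      calc ‖NS (π x) - NS (π y)‖ ≤ K * ‖π x - π y‖ := hK _ (hπf x hx) _ (hπf y hy)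
        _ ≤ K' * ‖π x - π y‖ :=
            mul_le_mul_of_nonneg_right (le_max_left _ _) (norm_nonneg _)
        _ ≤ K' * (C₁ * ‖x - y‖) := mul_le_mul_of_nonneg_left (hπlip x y hx hy) hK'0
        _ = K' * C₁ * ‖x - y‖ := by ring
    have hslip : ∀ x y : X, β ≤ gauge V x → β ≤ gauge V y →
        |⟪NS (π x), π x⟫ - ⟪NS (π y), π y⟫| ≤ (K' * R + 1) * C₁ * ‖x - y‖ := by
      intro x y hx hy
      have hdecomp : ⟪NS (π x), π x⟫ - ⟪NS (π y), π y⟫ =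
          ⟪NS (π x) - NS (π y), π x⟫ + ⟪NS (π y), π x - π y⟫ := by
        rw [inner_sub_left, inner_sub_right]; ring
      rw [hdecomp]
      calc |⟪NS (π x) - NS (π y), π x⟫ + ⟪NS (π y), π x - π y⟫|
          ≤ |⟪NS (π x) - NS (π y), π x⟫| + |⟪NS (π y), π x - π y⟫| := abs_add_le _ _
        _ ≤ ‖NS (π x) - NS (π y)‖ * ‖π x‖ + ‖NS (π y)‖ * ‖π x - π y‖ :=
            add_le_add (abs_real_inner_le_norm _ _) (abs_real_inner_le_norm _ _)
        _ ≤ (K' * C₁ * ‖x - y‖) * R + 1 * (C₁ * ‖x - y‖) := by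
            apply add_le_add
            · exact mul_le_mul (hulip x y hx hy) (hπR x hx) (norm_nonneg _)
                (by positivity)
            · rw [hu1 y hy]
              exact mul_le_mul_of_nonneg_left (hπlip x y hx hy) one_pos.le
        _ = (K' * R + 1) * C₁ * ‖x - y‖ := by ring
    set K₂ : ℝ := (2/r) * (K' * C₁) + (4/(r*r)) * ((K' * R + 1) * C₁) with hK₂def
    have hK₂0 : 0 ≤ K₂ := by positivity
    have hglip2 : ∀ x y : X, β ≤ gauge V x → β ≤ gauge V y →
        ‖g x - g y‖ ≤ K₂ * ‖x - y‖ := by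
      intro x y hx hy
      have hsx := hs_pos x hx
      have hsy := hs_pos y hy
      have h1 : ‖g x - g y‖ ≤ (⟪NS (π x), π x⟫)⁻¹ * ‖NS (π x) - NS (π y)‖ +
          (|⟪NS (π x), π x⟫ - ⟪NS (π y), π y⟫| * ‖NS (π y)‖) /
            (⟪NS (π x), π x⟫ * ⟪NS (π y), π y⟫) := by
        rw [hgdef]
        exact smul_inv_sub_le _ _ hsx hsy
      have hu := hulip x y hx hy
      have hs := hslip x y hx hy
      set M : ℝ := (K' * R + 1) * C₁ * ‖x - y‖ with hMdef
      have hM0 : 0 ≤ M := by positivity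
      have h2 : (⟪NS (π x), π x⟫)⁻¹ * ‖NS (π x) - NS (π y)‖ ≤
          (2/r) * (K' * C₁ * ‖x - y‖) := by
        have hinv : (⟪NS (π x), π x⟫)⁻¹ ≤ 2/r := by
          have hh := (inv_le_inv₀ hsx (by positivity : (0:ℝ) < r/2)).2 (hs_lb x hx)
          rwa [inv_div] at hh
        exact mul_le_mul hinv hu (norm_nonneg _) (by positivity)
      have h3 : (|⟪NS (π x), π x⟫ - ⟪NS (π y), π y⟫| * ‖NS (π y)‖) /
          (⟪NS (π x), π x⟫ * ⟪NS (π y), π y⟫) ≤ (4/(r*r)) * M := by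
        rw [hu1 y hy, mul_one]
        have hprod : (0:ℝ) < ⟪NS (π x), π x⟫ * ⟪NS (π y), π y⟫ := mul_pos hsx hsy
        rw [div_le_iff₀ hprod]
        have hden : (r/2) * (r/2) ≤ ⟪NS (π x), π x⟫ * ⟪NS (π y), π y⟫ :=
          mul_le_mul (hs_lb x hx) (hs_lb y hy) (by positivity) hsx.le
        have heqM : (4/(r*r)) * M * ((r/2)*(r/2)) = M := by field_simp; ring
        calc |⟪NS (π x), π x⟫ - ⟪NS (π y), π y⟫| ≤ M := hs
          _ = (4/(r*r)) * M * ((r/2)*(r/2)) := heqM.symm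
          _ ≤ (4/(r*r)) * M * (⟪NS (π x), π x⟫ * ⟪NS (π y), π y⟫) := by gcongr
      calc ‖g x - g y‖ ≤ (⟪NS (π x), π x⟫)⁻¹ * ‖NS (π x) - NS (π y)‖ +
            (|⟪NS (π x), π x⟫ - ⟪NS (π y), π y⟫| * ‖NS (π y)‖) /
              (⟪NS (π x), π x⟫ * ⟪NS (π y), π y⟫) := h1
        _ ≤ (2/r) * (K' * C₁ * ‖x - y‖) + (4/(r*r)) * M := add_le_add h2 h3
        _ = K₂ * ‖x - y‖ := by rw [hMdef, hK₂def]; ring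
    refine ⟨g, K₂, ?_, ?_⟩
    · intro x hx
      have hxβ : β ≤ gauge V x := le_trans hβα hx
      apply hasGradientAt_of_quadratic _ _ _ K₂
      have hopen : {y : X | β < gauge V y} ∈ nhds x := by
        have : IsOpen {y : X | β < gauge V y} :=
          isOpen_lt continuous_const (continuous_gauge hVcv hnh)
        exact this.mem_nhds (lt_of_lt_of_le (by rw [hβdef]; linarith) hx)
      filter_upwards [hopen] with y hy
      have hyβ : β ≤ gauge V y := hy.le
      have h1 := hsubgrad x y hxβ
      have h2 := hsubgrad y x hyβ
      have h3 : ⟪g y - g x, y - x⟫ ≤ ‖g y - g x‖ * ‖y - x‖ := real_inner_le_norm _ _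
      have h4 : ‖g y - g x‖ ≤ K₂ * ‖y - x‖ := hglip2 y x hyβ hxβ
      have h5 : ⟪g y, x - y⟫ = -⟪g y, y - x⟫ := by
        rw [← neg_sub, inner_neg_right]
      have h6 : ⟪g y - g x, y - x⟫ = ⟪g y, y - x⟫ - ⟪g x, y - x⟫ := by
        rw [inner_sub_left]
      rw [abs_le]
      constructor
      · have : 0 ≤ K₂ * ‖y - x‖ ^ 2 := by positivity
        linarith
      · have hchain : ‖g y - g x‖ * ‖y - x‖ ≤ K₂ * ‖y - x‖ ^ 2 := by
          rw [sq]
          calc ‖g y - g x‖ * ‖y - x‖ ≤ (K₂ * ‖y - x‖) * ‖y - x‖ :=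
                mul_le_mul_of_nonneg_right h4 (norm_nonneg _)
            _ = K₂ * (‖y - x‖ * ‖y - x‖) := by ring
        linarith
    · intro x y hx hy
      exact hglip2 x y (le_trans hβα hx) (le_trans hβα hy)
  · -- reverse: gauge C^{1,1} ⟹ NS Lipschitz
    intro h
    obtain ⟨g, K, hg, hKlip⟩ := h 1 one_pos
    have fact : ∀ z ∈ frontier V, NS z = ‖g z‖⁻¹ • g z ∧ R⁻¹ ≤ ‖g z‖ := by
      intro z hz
      have hz1 : gauge V z = 1 := (hfront z).2 hz
      have hgz := hg z (le_of_eq hz1.symm)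
      have hsub := fun w => gauge_subgradient hVcv hnh hgz w
      have h1le : 1 ≤ ⟪g z, z⟫ := by
        have h0' := hsub 0
        rw [gauge_zero, hz1, zero_sub, inner_neg_right] at h0'
        linarith
      have hzR : ‖z‖ ≤ R := hVnorm z (hVcl.frontier_subset hz)
      have hnz : 1 ≤ ‖g z‖ * ‖z‖ := le_trans h1le (real_inner_le_norm _ _)
      have hgz_lb : R⁻¹ ≤ ‖g z‖ := by
        have hh : 1 ≤ ‖g z‖ * R :=
          le_trans hnz (mul_le_mul_of_nonneg_left hzR (norm_nonneg _))
        calc R⁻¹ = R⁻¹ * 1 := (mul_one _).symm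
          _ ≤ R⁻¹ * (‖g z‖ * R) := mul_le_mul_of_nonneg_left hh (inv_nonneg.2 hR0.le)
          _ = ‖g z‖ := by
              rw [mul_comm (‖g z‖) R, ← mul_assoc, inv_mul_cancel₀ hR0.ne', one_mul]
      have hgz_pos : 0 < ‖g z‖ := lt_of_lt_of_le (by positivity) hgz_lb
      have hnormal : IsOutwardNormal V z (‖g z‖⁻¹ • g z) := by
        constructor
        · rw [norm_smul, Real.norm_eq_abs, abs_inv, abs_norm,
            inv_mul_cancel₀ hgz_pos.ne']
        · intro w hw
          rw [real_inner_smul_left]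
          have hw1 : gauge V w ≤ 1 := gauge_le_one_of_mem hw
          have := hsub w
          rw [hz1] at this
          have hle : ⟪g z, w - z⟫ ≤ 0 := by linarith
          exact mul_nonpos_of_nonneg_of_nonpos (inv_nonneg.2 hgz_pos.le) hle
      exact ⟨((hNS z hz).2 _ hnormal).symm, hgz_lb⟩
    refine ⟨2 * R * K, ?_⟩
    intro x hx y hy
    obtain ⟨hx_eq, hx_lb⟩ := fact x hx
    obtain ⟨hy_eq, hy_lb⟩ := fact y hy
    have hx1 : (1:ℝ) ≤ gauge V x := le_of_eq ((hfront x).2 hx).symm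
    have hy1 : (1:ℝ) ≤ gauge V y := le_of_eq ((hfront y).2 hy).symm
    have hgxy : ‖g x - g y‖ ≤ K * ‖x - y‖ := hKlip x y hx1 hy1
    rw [hx_eq, hy_eq]
    calc ‖‖g x‖⁻¹ • g x - ‖g y‖⁻¹ • g y‖ ≤ (2 / R⁻¹) * ‖g x - g y‖ :=
          normalize_lipschitz _ _ (inv_pos.2 hR0) hx_lb hy_lb
      _ = (2 * R) * ‖g x - g y‖ := by rw [div_eq_mul_inv, inv_inv]
      _ ≤ (2 * R) * (K * ‖x - y‖) :=
          mul_le_mul_of_nonneg_left hgxy (by positivity)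
      _ = 2 * R * K * ‖x - y‖ := by ring
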